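/- Let A and B be d×d real symmetric matrices. Then for every vector v ∈ ℝ^d, ‖(A ∘ B) v‖ ≤ √d · (max_{i,j} |A_{ij}|) · ‖B‖₂ · ‖v‖, where ∘ denotes the Hadamard product and ‖·‖₂ the spectral norm. -/

import Mathlib

/-- The spectral (ℓ²-operator) norm of a square real matrix. -/
noncomputable def specNorm {d : ℕ} (A : Matrix (Fin d) (Fin d) ℝ) : ℝ :=
  ‖Matrix.toEuclideanCLM (𝕜 := ℝ) A‖

lemma euc_abs_le_norm {d : ℕ} (x : EuclideanSpace ℝ (Fin d)) (i : Fin d) :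
    |x i| ≤ ‖x‖ := by
  rw [EuclideanSpace.norm_eq]
  have : |x i| = Real.sqrt (‖x i‖ ^ 2) := by
    rw [Real.sqrt_sq (norm_nonneg _)]; rfl
  rw [this]
  apply Real.sqrt_le_sqrt
  exact Finset.single_le_sum (f := fun j => ‖x j‖ ^ 2)
    (fun j _ => sq_nonneg _) (Finset.mem_univ i)

lemma euc_norm_mono {d : ℕ} (x y : EuclideanSpace ℝ (Fin d))
    (h : ∀ j, |x j| ≤ |y j|) : ‖x‖ ≤ ‖y‖ := by
  rw [EuclideanSpace.norm_eq, EuclideanSpace.norm_eq]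
  apply Real.sqrt_le_sqrt
  apply Finset.sum_le_sum
  intro j _
  have := h j
  simpa [Real.norm_eq_abs, sq_abs] using pow_le_pow_left₀ (abs_nonneg _) this 2

/-- For symmetric matrices `A`, `B` and every vector `v`,
`‖(A ∘ B) v‖ ≤ √d ⬝ (max_{i,j} |A_{ij}|) ⬝ ‖B‖₂ ⬝ ‖v‖`. -/
theorem stmt1 {d : ℕ} (hd : 0 < d) (A B : Matrix (Fin d) (Fin d) ℝ)
    (hA : A.IsSymm) (hB : B.IsSymm) (v : EuclideanSpace ℝ (Fin d)) :
    ‖Matrix.toEuclideanCLM (𝕜 := ℝ) (Matrix.hadamard A B) v‖ ≤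
      Real.sqrt d *
        (Finset.univ.sup' (Finset.univ_nonempty_iff.mpr ⟨⟨0, hd⟩⟩) fun i =>
          Finset.univ.sup' (Finset.univ_nonempty_iff.mpr ⟨⟨0, hd⟩⟩) fun j => |A i j|) *
        specNorm B * ‖v‖ := by
  have ne : (Finset.univ : Finset (Fin d)).Nonempty := Finset.univ_nonempty_iff.mpr ⟨⟨0, hd⟩⟩
  set M : ℝ := Finset.univ.sup' ne fun i => Finset.univ.sup' ne fun j => |A i j| with hMdef
  have hM : ∀ i j, |A i j| ≤ M := by
    intro i j
    have h1 : |A i j| ≤ Finset.univ.sup' ne (fun j => |A i j|) :=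
      Finset.le_sup' (fun j => |A i j|) (Finset.mem_univ j)
    have h2 : Finset.univ.sup' ne (fun j => |A i j|) ≤ M :=
      Finset.le_sup' (fun i => Finset.univ.sup' ne fun j => |A i j|) (Finset.mem_univ i)
    exact le_trans h1 h2
  have hM0 : 0 ≤ M := le_trans (abs_nonneg _) (hM ⟨0, hd⟩ ⟨0, hd⟩)
  -- the auxiliary vectors
  set u : Fin d → EuclideanSpace ℝ (Fin d) := fun i => WithLp.toLp 2 (fun j => A i j * v j) with hu
  have hunorm : ∀ i, ‖u i‖ ≤ M * ‖v‖ := by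
    intro i
    calc ‖u i‖ ≤ ‖M • v‖ := by
          apply euc_norm_mono
          intro j
          show |A i j * v j| ≤ |M * v j|
          rw [abs_mul, abs_mul, abs_of_nonneg hM0]
          exact mul_le_mul_of_nonneg_right (hM i j) (abs_nonneg _)
      _ = M * ‖v‖ := by rw [norm_smul, Real.norm_eq_abs, abs_of_nonneg hM0]
  -- componentwise identity
  have hcomp : ∀ i, (Matrix.toEuclideanCLM (𝕜 := ℝ) (Matrix.hadamard A B) v) i =
      (Matrix.toEuclideanCLM (𝕜 := ℝ) B (u i)) i := by
    intro i
    have h1 := congrFun (Matrix.ofLp_toEuclideanCLM (Matrix.hadamard A B) v) i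
    have h2 := congrFun (Matrix.ofLp_toEuclideanCLM B (u i)) i
    rw [h1, h2]
    simp only [Matrix.mulVec, dotProduct, Matrix.hadamard_apply]
    apply Finset.sum_congr rfl
    intro j _
    show A i j * B i j * v j = B i j * (u i j)
    ring
  -- componentwise bound
  have hbound : ∀ i, |(Matrix.toEuclideanCLM (𝕜 := ℝ) (Matrix.hadamard A B) v) i| ≤
      M * specNorm B * ‖v‖ := by
    intro i
    rw [hcomp i]
    calc |(Matrix.toEuclideanCLM (𝕜 := ℝ) B (u i)) i|
        ≤ ‖Matrix.toEuclideanCLM (𝕜 := ℝ) B (u i)‖ := euc_abs_le_norm _ i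
      _ ≤ specNorm B * ‖u i‖ := (Matrix.toEuclideanCLM (𝕜 := ℝ) B).le_opNorm _
      _ ≤ specNorm B * (M * ‖v‖) := by
          apply mul_le_mul_of_nonneg_left (hunorm i) (norm_nonneg _)
      _ = M * specNorm B * ‖v‖ := by ring
  -- sum up
  have hC0 : 0 ≤ M * specNorm B * ‖v‖ :=
    mul_nonneg (mul_nonneg hM0 (norm_nonneg _)) (norm_nonneg _)
  rw [EuclideanSpace.norm_eq]
  have : ∑ i : Fin d, ‖(Matrix.toEuclideanCLM (𝕜 := ℝ) (Matrix.hadamard A B) v) i‖ ^ 2 ≤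
      (d : ℝ) * (M * specNorm B * ‖v‖) ^ 2 := by
    calc ∑ i : Fin d, ‖(Matrix.toEuclideanCLM (𝕜 := ℝ) (Matrix.hadamard A B) v) i‖ ^ 2
        ≤ ∑ _i : Fin d, (M * specNorm B * ‖v‖) ^ 2 := by
          apply Finset.sum_le_sum
          intro i _
          rw [Real.norm_eq_abs]
          exact pow_le_pow_left₀ (abs_nonneg _) (hbound i) 2
      _ = (d : ℝ) * (M * specNorm B * ‖v‖) ^ 2 := by
          rw [Finset.sum_const, Finset.card_univ, Fintype.card_fin, nsmul_eq_mul]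
  calc Real.sqrt (∑ i : Fin d, ‖(Matrix.toEuclideanCLM (𝕜 := ℝ) (Matrix.hadamard A B) v) i‖ ^ 2)
      ≤ Real.sqrt ((d : ℝ) * (M * specNorm B * ‖v‖) ^ 2) := Real.sqrt_le_sqrt this
    _ = Real.sqrt d * (M * specNorm B * ‖v‖) := by
        rw [Real.sqrt_mul (Nat.cast_nonneg d), Real.sqrt_sq hC0]
    _ = Real.sqrt d * M * specNorm B * ‖v‖ := by ring
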